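/- Let A be a commutative ring and n ≥ 2. Inside GL_n(A[Z,Z^{-1}]), consider the subgroups U^+ of upper unitriangular matrices with entries in Z·A[Z], M = GL_n-block-diagonal matrices with entries in A, and U^- of lower unitriangular matrices with entries in Z^{-1}·A[Z^{-1}] (with respect to a fixed block decomposition). Then (U^+ · M · U^-) ∩ GL_n(A[Z], Z·A[Z]) = U^+, where GL_n(A[Z], Z·A[Z]) denotes matrices over A[Z] congruent to the identity mod Z. -/

import Mathlib

open Polynomial LaurentPolynomial

section MyAux

variable {A : Type*} [CommRing A]

lemma myAux_toLaurent_coeff_neg (p : Polynomial A) (k : ℤ) (hk : k < 0) :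
    (Polynomial.toLaurent p).coeff k = 0 := by
  rw [LaurentPolynomial.coeff_toLaurent]
  apply Finsupp.mapDomain_notin_range
  rintro ⟨n, hn⟩
  simp only [Nat.castEmbedding_apply] at hn
  omega

lemma myAux_toLaurent_coeff_nat (p : Polynomial A) (k : ℕ) :
    (Polynomial.toLaurent p).coeff (k : ℤ) = p.coeff k := by
  rw [LaurentPolynomial.coeff_toLaurent]
  exact Finsupp.mapDomain_apply Nat.castEmbedding.injective _ _

lemma myAux_toLaurent_eq_eval₂ (p : Polynomial A) :
    Polynomial.toLaurent p
      = Polynomial.eval₂ LaurentPolynomial.C (LaurentPolynomial.T 1) p := by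
  induction p using Polynomial.induction_on' with
  | add f g hf hg => simp [hf, hg]
  | monomial n a =>
      rw [Polynomial.toLaurent_C_mul_T, Polynomial.eval₂_monomial, LaurentPolynomial.T_pow,
        mul_one]

lemma myAux_algebraMap_eq_C :
    (algebraMap A (LaurentPolynomial A)) = LaurentPolynomial.C := by
  ext r
  simp [LaurentPolynomial.algebraMap_apply]

lemma myAux_eval₂_Tneg (p : Polynomial A) :
    Polynomial.eval₂ (algebraMap A (LaurentPolynomial A)) (LaurentPolynomial.T (-1)) p
      = LaurentPolynomial.invert (Polynomial.toLaurent p) := by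
  rw [myAux_toLaurent_eq_eval₂]
  have h := Polynomial.hom_eval₂ p LaurentPolynomial.C
    ((LaurentPolynomial.invert (R := A)).toAlgHom.toRingHom) (LaurentPolynomial.T 1)
  simp only [AlgHom.toRingHom_eq_coe, AlgHom.coe_ringHom_mk, AlgEquiv.toAlgHom_eq_coe,
    RingHom.coe_coe, AlgHom.coe_coe] at h
  rw [show LaurentPolynomial.invert (eval₂ LaurentPolynomial.C (LaurentPolynomial.T 1) p)
      = _ from h]
  congr 1
  · ext r
    simp [myAux_algebraMap_eq_C, LaurentPolynomial.invert_C]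
  · simp

lemma myAux_vanish (p qw : Polynomial A)
    (h : Polynomial.toLaurent p =
        Polynomial.eval₂ (algebraMap A (LaurentPolynomial A)) (LaurentPolynomial.T (-1)) qw *
          LaurentPolynomial.T (-1)) :
    Polynomial.toLaurent p = 0 := by
  rw [myAux_eval₂_Tneg] at h
  have h2 : LaurentPolynomial.invert (Polynomial.toLaurent p)
      = Polynomial.toLaurent (qw * Polynomial.X) := by
    apply_fun (LaurentPolynomial.invert : LaurentPolynomial A ≃ₐ[A] _) at h
    rw [map_mul, LaurentPolynomial.involutive_invert _, LaurentPolynomial.invert_T] at h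
    rw [h, map_mul, Polynomial.toLaurent_X]
    norm_num
  have h3 : Polynomial.toLaurent (qw * Polynomial.X) = 0 := by
    ext k
    rcases lt_trichotomy k 0 with hk | hk | hk
    · rw [myAux_toLaurent_coeff_neg _ k hk]; rfl
    · subst hk
      have := myAux_toLaurent_coeff_nat (qw * Polynomial.X) 0
      simp only [Nat.cast_zero] at this
      rw [this, Polynomial.coeff_mul_X_zero]; rfl
    · rw [← h2]
      have : (LaurentPolynomial.invert (Polynomial.toLaurent p)).coeff k
          = (Polynomial.toLaurent p).coeff (-k) := LaurentPolynomial.invert_apply _ _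
      rw [this, myAux_toLaurent_coeff_neg _ (-k) (by omega)]; rfl
  rw [h3] at h2
  have := LaurentPolynomial.involutive_invert (Polynomial.toLaurent p)
  rw [h2] at this
  simpa using this.symm

lemma myAux_mul_mem {R : Type*} [CommRing R] {n : ℕ} (S : Subring R)
    (M N : Matrix (Fin n) (Fin n) R) (hM : ∀ i j, M i j ∈ S) (hN : ∀ i j, N i j ∈ S)
    (i j : Fin n) : (M * N) i j ∈ S := by
  rw [Matrix.mul_apply]
  exact Subring.sum_mem _ fun k _ => S.mul_mem (hM i k) (hN k j)

lemma myAux_adjugate_mem {R : Type*} [CommRing R] {n : ℕ} (S : Subring R)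
    (M : Matrix (Fin n) (Fin n) R) (hM : ∀ i j, M i j ∈ S) (i j : Fin n) :
    M.adjugate i j ∈ S := by
  let M0 : Matrix (Fin n) (Fin n) S := fun i j => ⟨M i j, hM i j⟩
  have hM0 : S.subtype.mapMatrix M0 = M := by ext a b; rfl
  rw [← hM0, ← S.subtype.map_adjugate M0]
  simp only [RingHom.mapMatrix_apply, Matrix.map_apply]
  exact SetLike.coe_mem _

end MyAux

/-- Fix a block decomposition of `n ≥ 2` (given by a monotone block-index
function `π : Fin n → ℕ`).  Inside `GL_n(A[Z,Z^{-1}])` consider `U^+` (block upper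
unitriangular matrices with off-diagonal entries in `Z·A[Z]`), `M` (invertible
block-diagonal matrices with entries in `A`), and `U^-` (block lower unitriangular
matrices with off-diagonal entries in `Z^{-1}·A[Z^{-1}]`).  Then
`(U^+ · M · U^-) ∩ GL_n(A[Z], Z·A[Z]) = U^+`: any product `g = u·m·w` of this shape
whose entries lie in `A[Z]` and which is `≡ 1 (mod Z)` already lies in `U^+`. -/
theorem stmt_11 (A : Type*) [CommRing A] (n : ℕ) (hn : 2 ≤ n)
    (π : Fin n → ℕ) (hπ : Monotone π)
    (u m w g : Matrix (Fin n) (Fin n) (LaurentPolynomial A))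
    -- `u ∈ U^+`: block upper unitriangular, upper entries in `Z·A[Z]`
    (hu_diag : ∀ i j, π i = π j → u i j = if i = j then 1 else 0)
    (hu_low : ∀ i j, π j < π i → u i j = 0)
    (hu_up : ∀ i j, π i < π j →
      ∃ q : Polynomial A, u i j = Polynomial.toLaurent q * LaurentPolynomial.T 1)
    -- `m ∈ M(A)`: invertible block diagonal with entries in `A`
    (c : Matrix (Fin n) (Fin n) A) (hc : IsUnit c)
    (hm : m = c.map (algebraMap A (LaurentPolynomial A)))
    (hc_diag : ∀ i j, π i ≠ π j → c i j = 0)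
    -- `w ∈ U^-`: block lower unitriangular, lower entries in `Z^{-1}·A[Z^{-1}]`
    (hw_diag : ∀ i j, π i = π j → w i j = if i = j then 1 else 0)
    (hw_up : ∀ i j, π i < π j → w i j = 0)
    (hw_low : ∀ i j, π j < π i →
      ∃ q : Polynomial A, w i j =
        Polynomial.eval₂ (algebraMap A (LaurentPolynomial A)) (LaurentPolynomial.T (-1)) q *
          LaurentPolynomial.T (-1))
    -- `g = u·m·w` lies in `GL_n(A[Z], Z·A[Z])`
    (hg : g = u * m * w)
    (q : Matrix (Fin n) (Fin n) (Polynomial A)) (hgq : g = q.map Polynomial.toLaurent)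
    (hq0 : ∀ i j, Polynomial.eval 0 (q i j) = if i = j then 1 else 0) :
    -- then `g ∈ U^+`
    (∀ i j, π i = π j → g i j = if i = j then 1 else 0) ∧
    (∀ i j, π j < π i → g i j = 0) ∧
    (∀ i j, π i < π j →
      ∃ p : Polynomial A, g i j = Polynomial.toLaurent p * LaurentPolynomial.T 1) := by
  
  have hne : ∀ {i j : Fin n}, π i ≠ π j → i ≠ j := fun h e => h (congrArg π e)
  set φ := algebraMap A (LaurentPolynomial A) with hφ
  set S := (Polynomial.toLaurent : Polynomial A →+* LaurentPolynomial A).range with hS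
  -- entries of u, g, m' are in S
  have hu_mem : ∀ i j, u i j ∈ S := by
    intro i j
    rcases lt_trichotomy (π i) (π j) with h | h | h
    · obtain ⟨p, hp⟩ := hu_up i j h
      exact ⟨p * Polynomial.X, by rw [hp, map_mul, Polynomial.toLaurent_X]⟩
    · rw [hu_diag i j h]
      split
      · exact one_mem S
      · exact zero_mem S
    · rw [hu_low i j h]; exact zero_mem S
  have hg_mem : ∀ i j, g i j ∈ S := fun i j =>
    ⟨q i j, by rw [hgq, Matrix.map_apply]⟩
  -- triangularity and determinant of u
  have hu_tri : u.BlockTriangular id := by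
    intro i j hij
    have hle : π j ≤ π i := hπ (le_of_lt hij)
    rcases eq_or_lt_of_le hle with h | h
    · rw [hu_diag i j h.symm, if_neg (fun e => absurd e.symm (ne_of_lt hij))]
    · exact hu_low i j h
  have hdet : u.det = 1 := by
    rw [Matrix.det_of_upperTriangular hu_tri]
    apply Finset.prod_eq_one
    intro i _
    rw [hu_diag i i rfl, if_pos rfl]
  have hadj : u.adjugate * u = 1 := by rw [Matrix.adjugate_mul, hdet, one_smul]
  -- inverse of m
  have hcu : (hc.unit : Matrix (Fin n) (Fin n) A) = c := hc.unit_spec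
  set c' : Matrix (Fin n) (Fin n) A := ↑hc.unit⁻¹ with hc'
  have hc'c : c' * c = 1 := by rw [← hcu, hc']; exact hc.unit.inv_mul
  set m' : Matrix (Fin n) (Fin n) (LaurentPolynomial A) := c'.map φ with hm'
  have hm'_mem : ∀ i j, m' i j ∈ S := fun i j =>
    ⟨Polynomial.C (c' i j), by
      rw [hm', Matrix.map_apply, Polynomial.toLaurent_C, hφ, myAux_algebraMap_eq_C]⟩
  have hmm' : m' * m = 1 := by
    rw [hm, hm', ← Matrix.map_mul, hc'c, Matrix.map_one _ (map_zero φ) (map_one φ)]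
  -- recover w
  have hw_eq : m' * u.adjugate * g = w := by
    rw [hg]
    simp only [← mul_assoc]
    rw [mul_assoc m' u.adjugate u, hadj, mul_one, hmm', one_mul]
  have hw_mem : ∀ i j, w i j ∈ S := by
    intro i j
    rw [← hw_eq]
    exact myAux_mul_mem S _ g
      (myAux_mul_mem S m' u.adjugate hm'_mem (myAux_adjugate_mem S u hu_mem)) hg_mem i j
  -- lower entries of w vanish
  have hw0 : ∀ i j, π j < π i → w i j = 0 := by
    intro i j h
    obtain ⟨qw, hqw⟩ := hw_low i j h
    obtain ⟨p, hp⟩ := hw_mem i j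
    rw [← hp]
    exact myAux_vanish p qw (hp.trans hqw)
  have hw1 : w = 1 := by
    ext i j
    rcases lt_trichotomy (π i) (π j) with h | h | h
    · rw [hw_up i j h, Matrix.one_apply, if_neg (hne (ne_of_lt h))]
    · rw [hw_diag i j h, Matrix.one_apply]
    · rw [hw0 i j h, Matrix.one_apply, if_neg (hne (ne_of_gt h))]
  have hg' : g = u * m := by rw [hg, hw1, mul_one]
  refine ⟨?_, ?_, ?_⟩
  · -- diagonal blocks
    intro i j hij
    have hgij : g i j = φ (c i j) := by
      rw [hg', Matrix.mul_apply]
      have hsum : ∀ k ∈ Finset.univ, k ≠ i → u i k * m k j = 0 := by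
        intro k _ hk
        rcases lt_trichotomy (π i) (π k) with h | h | h
        · have hkj : π k ≠ π j := by omega
          rw [hm, Matrix.map_apply, hc_diag k j hkj, map_zero, mul_zero]
        · rw [hu_diag i k h, if_neg (fun e => hk e.symm), zero_mul]
        · rw [hu_low i k h, zero_mul]
      rw [Finset.sum_eq_single i hsum (fun h => absurd (Finset.mem_univ i) h)]
      rw [hu_diag i i rfl, if_pos rfl, one_mul, hm, Matrix.map_apply]
    have hq_ij : q i j = Polynomial.C (c i j) := by
      apply Polynomial.toLaurent_injective
      have : Polynomial.toLaurent (q i j) = g i j := by rw [hgq, Matrix.map_apply]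
      rw [this, hgij, Polynomial.toLaurent_C, hφ, myAux_algebraMap_eq_C]
    have hcij := hq0 i j
    rw [hq_ij, Polynomial.eval_C] at hcij
    rw [hgij, hcij]
    split_ifs <;> simp
  · -- lower blocks
    intro i j h
    rw [hg', Matrix.mul_apply]
    apply Finset.sum_eq_zero
    intro k _
    rcases eq_or_ne (π k) (π j) with hkj | hkj
    · rw [hu_low i k (by omega), zero_mul]
    · rw [hm, Matrix.map_apply, hc_diag k j hkj, map_zero, mul_zero]
  · -- upper blocks
    intro i j h
    have h0 : (q i j).coeff 0 = 0 := by
      rw [Polynomial.coeff_zero_eq_eval_zero, hq0 i j, if_neg (hne (ne_of_lt h))]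
    obtain ⟨p, hp⟩ := Polynomial.X_dvd_iff.mpr h0
    refine ⟨p, ?_⟩
    rw [hgq, Matrix.map_apply, hp, map_mul, Polynomial.toLaurent_X, mul_comm]
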